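/- Let G = 𝔽₂ⁿ and let A ⊆ G be nonempty with |A+A| ≤ K|A| and density α = |A|/2ⁿ. Then A+A+A+A contains a subspace of G of codimension at most C·K·log(1/α) + C for some absolute constant C. -/

import Mathlib

open Finset BigOperators Pointwise

namespace ChangAux
variable {n : ℕ}

local notation "G" => (Fin n → ZMod 2)



lemma add_self_zero (x : G) : x + x = 0 := by
  ext i
  have h2 : (2 : ZMod 2) = 0 := by decide
  calc x i + x i = 2 * x i := by ring
  _ = 0 := by rw [h2, zero_mul]

lemma add_eq_zero_iff (x y : G) : x + y = 0 ↔ x = y := by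
  constructor
  · intro h
    calc x = x + (y + y) := by rw [add_self_zero, add_zero]
    _ = (x + y) + y := (add_assoc x y y).symm
    _ = y := by rw [h, zero_add]
  · rintro rfl; exact add_self_zero x

noncomputable def chi (γ x : G) : ℝ := if dotProduct γ x = 0 then 1 else -1

lemma chi_ite (a : ZMod 2) : ∀ b : ZMod 2,
    (if a + b = 0 then (1:ℝ) else -1) = (if a = 0 then (1:ℝ) else -1) * (if b = 0 then (1:ℝ) else -1) := by
  have h01 : ∀ z : ZMod 2, z = 0 ∨ z = 1 := by decide
  intro b
  rcases h01 a with rfl | rfl <;> rcases h01 b with rfl | rfl <;>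
    simp [show ((1:ZMod 2)+1) = 0 from rfl, show (1:ZMod 2) ≠ 0 from by decide]

lemma chi_add_right (γ x y : G) : chi γ (x + y) = chi γ x * chi γ y := by
  unfold chi
  rw [dotProduct_add]
  exact chi_ite _ _

lemma chi_add_left (γ δ x : G) : chi (γ + δ) x = chi γ x * chi δ x := by
  unfold chi
  rw [add_dotProduct]
  exact chi_ite _ _

lemma chi_sq (γ x : G) : chi γ x * chi γ x = 1 := by
  unfold chi; split <;> norm_num

lemma chi_zero_right (γ : G) : chi γ 0 = 1 := by
  unfold chi; rw [dotProduct_zero]; simp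

lemma chi_zero_left (x : G) : chi 0 x = 1 := by
  unfold chi; rw [zero_dotProduct]; simp

lemma chi_comm (γ x : G) : chi γ x = chi x γ := by
  unfold chi; rw [dotProduct_comm]

lemma chi_eq_one (γ x : G) (h : dotProduct γ x = 0) : chi γ x = 1 := if_pos h

lemma chi_nonneg_sq (γ x : G) : 0 ≤ chi γ x * chi γ x := by rw [chi_sq]; norm_num

lemma neg_one_le_chi (γ x : G) : -1 ≤ chi γ x := by unfold chi; split <;> norm_num
lemma chi_le_one (γ x : G) : chi γ x ≤ 1 := by unfold chi; split <;> norm_num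

lemma sum_shift (t : G) (g : G → ℝ) : ∑ x : G, g (x + t) = ∑ x : G, g x :=
  Equiv.sum_comp (Equiv.addRight t) g

lemma sum_chi (γ : G) : ∑ x : G, chi γ x = if γ = 0 then ((Fintype.card G : ℝ)) else 0 := by
  split
  · subst ‹γ = 0›; simp [chi_zero_left]
  · rename_i hγ
    obtain ⟨i, hi⟩ : ∃ i, γ i ≠ 0 := by
      by_contra h; push_neg at h; exact hγ (funext h)
    set t : G := Pi.single i 1 with ht
    have hdot : dotProduct γ t ≠ 0 := by
      rw [ht, dotProduct_single, mul_one]; exact hi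
    have hct : chi γ t = -1 := if_neg hdot
    have := sum_shift t (chi γ)
    have h2 : ∑ x : G, chi γ (x + t) = -∑ x : G, chi γ x := by
      simp only [chi_add_right, hct, mul_neg_one]
      exact Finset.sum_neg_distrib _
    linarith [this, h2]

/-! ### Double factorial -/

def Dnat : ℕ → ℕ := fun m => ∏ j ∈ Finset.range m, (2*j+1)

lemma Dnat_succ (m : ℕ) : Dnat (m+1) = Dnat m * (2*m+1) := Finset.prod_range_succ _ _

lemma Dnat_pos (m : ℕ) : 0 < Dnat m := Finset.prod_pos (fun j _ => by omega)

lemma fact2 (k : ℕ) : 2^k * k.factorial * Dnat k = (2*k).factorial := by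
  induction k with
  | zero => simp [Dnat]
  | succ k ih =>
    have h1 : 2*(k+1) = (2*k+1)+1 := by ring
    rw [h1, Nat.factorial_succ, Nat.factorial_succ, Dnat_succ, Nat.factorial_succ]
    calc 2^(k+1) * ((k+1) * k.factorial) * (Dnat k * (2*k+1))
        = ((2*k+1)+1) * ((2*k+1) * (2^k * k.factorial * Dnat k)) := by ring
      _ = ((2*k+1)+1) * ((2*k+1) * (2*k).factorial) := by rw [ih]

lemma fact3 (r : ℕ) : 2^r * r.factorial ≤ (2*r).factorial := by
  induction r with
  | zero => simp
  | succ r ih =>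
    have h1 : 2*(r+1) = (2*r+1)+1 := by ring
    rw [h1, Nat.factorial_succ, Nat.factorial_succ, Nat.factorial_succ]
    calc 2^(r+1) * ((r+1) * r.factorial) = ((2*r+1)+1) * (2^r * r.factorial) := by ring
      _ ≤ ((2*r+1)+1) * (2*r).factorial := Nat.mul_le_mul_left _ ih
      _ ≤ ((2*r+1)+1) * ((2*r+1) * (2*r).factorial) := by
          apply Nat.mul_le_mul_left
          exact Nat.le_mul_of_pos_left _ (by omega)

lemma comb_nat {r m : ℕ} (h : r ≤ m) :
    (2*m).choose (2*r) * Dnat (m-r) ≤ Dnat m * m.choose r := by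
  have key1 : (2*m).choose (2*r) * ((2*r).factorial * (2*m - 2*r).factorial) = (2*m).factorial := by
    rw [← mul_assoc]
    exact Nat.choose_mul_factorial_mul_factorial (by omega)
  have key2' : 2^(m-r) * ((m-r).factorial * Dnat (m-r)) = (2*m - 2*r).factorial := by
    have h3 : 2*(m-r) = 2*m - 2*r := by omega
    rw [← h3, ← fact2 (m-r), mul_assoc]
  have key4 : m.choose r * (r.factorial * (m-r).factorial) = m.factorial := by
    rw [← mul_assoc]
    exact Nat.choose_mul_factorial_mul_factorial h
  have key5 : 2^m * m.factorial * Dnat m = (2*m).factorial := fact2 m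
  have key6 : (2:ℕ)^r * 2^(m-r) = 2^m := by
    rw [← pow_add]; congr 1; omega
  set M : ℕ := 2^m * (r.factorial * ((m-r).factorial * (2*r).factorial)) with hM
  have hMpos : 0 < M := by positivity
  have E1 : (2*m).choose (2*r) * Dnat (m-r) * M = (2*m).factorial * (2^r * r.factorial) := by
    calc (2*m).choose (2*r) * Dnat (m-r) * M
        = (2^r * r.factorial) * ((2*m).choose (2*r) * ((2*r).factorial * (2^(m-r) * ((m-r).factorial * Dnat (m-r))))) := by
          rw [hM, ← key6]; ring
      _ = (2^r * r.factorial) * ((2*m).choose (2*r) * ((2*r).factorial * (2*m - 2*r).factorial)) := by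
          rw [key2']
      _ = (2*m).factorial * (2^r * r.factorial) := by rw [key1]; ring
  have E2 : Dnat m * m.choose r * M = (2*m).factorial * (2*r).factorial := by
    calc Dnat m * m.choose r * M
        = (2*r).factorial * (2^m * (m.choose r * (r.factorial * (m-r).factorial)) * Dnat m) := by
          rw [hM]; ring
      _ = (2*r).factorial * (2^m * m.factorial * Dnat m) := by rw [key4]
      _ = (2*m).factorial * (2*r).factorial := by rw [key5]; ring
  have hle : (2*m).choose (2*r) * Dnat (m-r) * M ≤ Dnat m * m.choose r * M := by
    rw [E1, E2]
    exact Nat.mul_le_mul_left _ (fact3 r)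
  exact Nat.le_of_mul_le_mul_right hle hMpos

noncomputable def Df : ℕ → ℝ := fun m => (Dnat m : ℝ)

lemma Df_nonneg (m : ℕ) : 0 ≤ Df m := Nat.cast_nonneg _

lemma Df_le (m : ℕ) : Df m ≤ (2*m+1 : ℝ)^m := by
  rw [Df, Dnat]
  push_cast
  calc (∏ j ∈ Finset.range m, (2*(j:ℝ)+1)) ≤ ∏ j ∈ Finset.range m, (2*(m:ℝ)+1) := by
        apply Finset.prod_le_prod
        · intro j _; positivity
        · intro j hj
          have := Finset.mem_range.mp hj
          have : (j:ℝ) ≤ m := by exact_mod_cast this.le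
          linarith
    _ = (2*(m:ℝ)+1)^m := by rw [Finset.prod_const, Finset.card_range]

/-! ### chi powers -/

lemma chi_pow_even (γ x : G) (r : ℕ) : (chi γ x)^(2*r) = 1 := by
  rw [pow_mul]
  have : (chi γ x)^2 = 1 := by rw [sq, chi_sq]
  rw [this, one_pow]

lemma chi_pow_odd (γ x : G) (r : ℕ) : (chi γ x)^(2*r+1) = chi γ x := by
  rw [pow_succ, chi_pow_even, one_mul]

/-! ### dual vector -/

lemma exists_dual (Λ' : Finset (Fin n → ZMod 2)) (γ₀ : G)
    (h : γ₀ ∉ Submodule.span (ZMod 2) (↑Λ' : Set (Fin n → ZMod 2))) :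
    ∃ t : G, dotProduct γ₀ t = 1 ∧ ∀ γ ∈ Λ', dotProduct γ t = 0 := by
  set W := Submodule.span (ZMod 2) (↑Λ' : Set (Fin n → ZMod 2)) with hW
  have hq : W.mkQ γ₀ ≠ 0 := by
    rw [Submodule.mkQ_apply, Ne, Submodule.Quotient.mk_eq_zero]
    exact h
  obtain ⟨ψ, hψ⟩ : ∃ ψ : Module.Dual (ZMod 2) ((Fin n → ZMod 2) ⧸ W), ψ (W.mkQ γ₀) ≠ 0 := by
    by_contra hc
    push_neg at hc
    exact hq ((Module.forall_dual_apply_eq_zero_iff (ZMod 2) _).mp hc)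
  set φ : (Fin n → ZMod 2) →ₗ[ZMod 2] ZMod 2 := ψ.comp W.mkQ with hφ
  set t : G := fun i => φ (Pi.single i 1) with htdef
  have hsingle : ∀ i : Fin n, (fun j => if i = j then (1:ZMod 2) else 0) = Pi.single i 1 := by
    intro i; funext j
    rw [Pi.single_apply]
    by_cases hij : i = j
    · subst hij; simp
    · rw [if_neg hij, if_neg (Ne.symm hij)]
  have hdot : ∀ x : G, dotProduct x t = φ x := by
    intro x
    have hx := LinearMap.pi_apply_eq_sum_univ φ x
    rw [hx, dotProduct]
    refine Finset.sum_congr rfl fun i _ => ?_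
    rw [htdef, smul_eq_mul]
    simp only []
    rw [hsingle i]
  refine ⟨t, ?_, ?_⟩
  · rw [hdot γ₀]
    have : φ γ₀ ≠ 0 := hψ
    revert this
    generalize φ γ₀ = a
    revert a; decide
  · intro γ hγ
    rw [hdot γ]
    have hmem : γ ∈ W := Submodule.subset_span (Finset.mem_coe.mpr hγ)
    have : W.mkQ γ = 0 := (Submodule.Quotient.mk_eq_zero W).mpr hmem
    rw [hφ, LinearMap.comp_apply, this, map_zero]

/-! ### odd sums vanish -/

lemma sum_mul_chi_eq_zero (F : G → ℝ) (γ₀ t : G) (hF : ∀ x, F (x+t) = F x)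
    (ht : chi γ₀ t = -1) : ∑ x : G, F x * chi γ₀ x = 0 := by
  have h1 : ∑ x : G, F (x+t) * chi γ₀ (x+t) = ∑ x : G, F x * chi γ₀ x :=
    sum_shift t (fun x => F x * chi γ₀ x)
  have h2 : ∀ x : G, F (x+t) * chi γ₀ (x+t) = -(F x * chi γ₀ x) := by
    intro x
    rw [hF, chi_add_right, ht]; ring
  rw [Finset.sum_congr rfl (fun x _ => h2 x), Finset.sum_neg_distrib] at h1
  linarith

/-! ### Khintchine -/

lemma khintchine (c : (Fin n → ZMod 2) → ℝ) (Λ : Finset (Fin n → ZMod 2))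
    (hΛ : LinearIndependent (ZMod 2)
      (fun γ : (Λ : Set (Fin n → ZMod 2)) => (γ : Fin n → ZMod 2)))
    (m : ℕ) :
    ∑ x : G, (∑ γ ∈ Λ, c γ * chi γ x)^(2*m)
      ≤ (Fintype.card G : ℝ) * Df m * (∑ γ ∈ Λ, (c γ)^2)^m := by
  induction Λ using Finset.cons_induction generalizing m with
  | empty =>
    simp only [Finset.sum_empty]
    cases m with
    | zero => simp [Df, Dnat]
    | succ m =>
      have : (0:ℝ)^(2*(m+1)) = 0 := by
        apply zero_pow; omega
      rw [this, Finset.sum_const, smul_zero, zero_pow (by omega : m + 1 ≠ 0), mul_zero]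
  | cons γ₀ Λ' hnm ih =>
    have hcoe : ((Finset.cons γ₀ Λ' hnm : Finset (Fin n → ZMod 2)) : Set (Fin n → ZMod 2))
        = insert γ₀ (↑Λ' : Set (Fin n → ZMod 2)) := by
      rw [Finset.cons_eq_insert, Finset.coe_insert]
    rw [hcoe] at hΛ
    replace hΛ := (linearIndepOn_id_insert (by exact_mod_cast hnm)).mp hΛ
    obtain ⟨hΛ', hspan⟩ := hΛ
    obtain ⟨t, ht1, ht0⟩ := exists_dual Λ' γ₀ hspan
    set f' : G → ℝ := fun x => ∑ γ ∈ Λ', c γ * chi γ x with hf'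
    have hinv : ∀ x : G, f' (x + t) = f' x := by
      intro x
      rw [hf']
      refine Finset.sum_congr rfl fun γ hγ => ?_
      rw [chi_add_right, chi_eq_one γ t (ht0 γ hγ), mul_one]
    have hct : chi γ₀ t = -1 := by
      rw [chi]
      rw [if_neg (by rw [ht1]; exact one_ne_zero)]
    set N : ℝ := (Fintype.card G : ℝ) with hN
    set σ' : ℝ := ∑ γ ∈ Λ', (c γ)^2 with hσ'
    -- expand
    have expand : ∑ x : G, (∑ γ ∈ Finset.cons γ₀ Λ' hnm, c γ * chi γ x)^(2*m)
        = ∑ j ∈ Finset.range (2*m+1),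
            ((c γ₀)^j * ((2*m).choose j : ℝ)) * (∑ x : G, (chi γ₀ x)^j * (f' x)^(2*m-j)) := by
      have e1 : ∀ x : G, (∑ γ ∈ Finset.cons γ₀ Λ' hnm, c γ * chi γ x)^(2*m)
          = ∑ j ∈ Finset.range (2*m+1),
              ((c γ₀)^j * ((2*m).choose j : ℝ)) * ((chi γ₀ x)^j * (f' x)^(2*m-j)) := by
        intro x
        rw [Finset.sum_cons, add_pow]
        refine Finset.sum_congr rfl fun j _ => ?_
        rw [mul_pow]
        ring
      rw [Finset.sum_congr rfl (fun x _ => e1 x), Finset.sum_comm]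
      exact Finset.sum_congr rfl fun j _ => by rw [← Finset.mul_sum]
    rw [expand]
    -- odd terms vanish
    have hodd : ∀ j ∈ Finset.range (2*m+1), ¬ Even j →
        ((c γ₀)^j * ((2*m).choose j : ℝ)) * (∑ x : G, (chi γ₀ x)^j * (f' x)^(2*m-j)) = 0 := by
      intro j _ hoddj
      obtain ⟨r, hr⟩ := Nat.not_even_iff_odd.mp hoddj
      have : ∑ x : G, (chi γ₀ x)^j * (f' x)^(2*m-j) = 0 := by
        have e2 : ∀ x : G, (chi γ₀ x)^j * (f' x)^(2*m-j) = ((f' x)^(2*m-j)) * chi γ₀ x := by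
          intro x
          rw [hr, chi_pow_odd]; ring
        rw [Finset.sum_congr rfl (fun x _ => e2 x)]
        exact sum_mul_chi_eq_zero (fun x => (f' x)^(2*m-j)) γ₀ t
          (fun x => by rw [hinv]) hct
      rw [this, mul_zero]
    -- reduce to even terms
    have hsplit : ∑ j ∈ Finset.range (2*m+1),
          ((c γ₀)^j * ((2*m).choose j : ℝ)) * (∑ x : G, (chi γ₀ x)^j * (f' x)^(2*m-j))
        = ∑ r ∈ Finset.range (m+1),
          ((c γ₀)^(2*r) * ((2*m).choose (2*r) : ℝ)) * (∑ x : G, (chi γ₀ x)^(2*r) * (f' x)^(2*m-2*r)) := by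
      rw [← Finset.sum_filter_add_sum_filter_not (Finset.range (2*m+1)) (fun j => Even j)]
      have hzero : ∑ j ∈ Finset.filter (fun j => ¬ Even j) (Finset.range (2*m+1)),
          ((c γ₀)^j * ((2*m).choose j : ℝ)) * (∑ x : G, (chi γ₀ x)^j * (f' x)^(2*m-j)) = 0 := by
        apply Finset.sum_eq_zero
        intro j hj
        rw [Finset.mem_filter] at hj
        exact hodd j hj.1 hj.2
      rw [hzero, add_zero]
      have himg : Finset.filter (fun j => Even j) (Finset.range (2*m+1))
          = Finset.image (fun r => 2*r) (Finset.range (m+1)) := by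
        ext j
        simp only [Finset.mem_filter, Finset.mem_range, Finset.mem_image, Nat.even_iff]
        constructor
        · rintro ⟨h1, h2⟩; exact ⟨j / 2, by omega, by omega⟩
        · rintro ⟨r, hr, rfl⟩; omega
      rw [himg, Finset.sum_image (by intro a _ b _ hab; beta_reduce at hab; omega)]
    rw [hsplit]
    -- bound each even term
    have hbound : ∀ r ∈ Finset.range (m+1),
        ((c γ₀)^(2*r) * ((2*m).choose (2*r) : ℝ)) * (∑ x : G, (chi γ₀ x)^(2*r) * (f' x)^(2*m-2*r))
        ≤ N * Df m * (((m.choose r : ℝ)) * ((c γ₀)^2)^r * σ'^(m-r)) := by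
      intro r hr
      have hrm : r ≤ m := by
        have := Finset.mem_range.mp hr; omega
      have e3 : ∑ x : G, (chi γ₀ x)^(2*r) * (f' x)^(2*m-2*r) = ∑ x : G, (f' x)^(2*(m-r)) := by
        refine Finset.sum_congr rfl fun x _ => ?_
        rw [chi_pow_even, one_mul]
        congr 1
        omega
      rw [e3]
      have hih := ih hΛ' (m - r)
      have hc2r : (c γ₀)^(2*r) = ((c γ₀)^2)^r := by rw [← pow_mul]
      calc ((c γ₀)^(2*r) * ((2*m).choose (2*r) : ℝ)) * (∑ x : G, (f' x)^(2*(m-r)))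
          ≤ ((c γ₀)^(2*r) * ((2*m).choose (2*r) : ℝ)) * (N * Df (m-r) * σ'^(m-r)) := by
            apply mul_le_mul_of_nonneg_left hih
            have h1 : (0:ℝ) ≤ (c γ₀)^(2*r) := by rw [hc2r]; exact pow_nonneg (sq_nonneg _) r
            have h2 : (0:ℝ) ≤ ((2*m).choose (2*r) : ℝ) := Nat.cast_nonneg _
            exact mul_nonneg h1 h2
        _ = (((2*m).choose (2*r) : ℝ) * Df (m-r)) * (((c γ₀)^2)^r * σ'^(m-r) * N) := by
            rw [hc2r]; ring
        _ ≤ (Df m * ((m.choose r : ℝ))) * (((c γ₀)^2)^r * σ'^(m-r) * N) := by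
            apply mul_le_mul_of_nonneg_right
            · have := comb_nat hrm
              rw [Df, Df]
              exact_mod_cast this
            · have hN0 : (0:ℝ) ≤ N := by rw [hN]; positivity
              have hσ0 : (0:ℝ) ≤ σ' := by
                rw [hσ']; exact Finset.sum_nonneg fun γ _ => sq_nonneg _
              have h1 : (0:ℝ) ≤ ((c γ₀)^2)^r := by positivity
              exact mul_nonneg (mul_nonneg h1 (pow_nonneg hσ0 _)) hN0
        _ = N * Df m * (((m.choose r : ℝ)) * ((c γ₀)^2)^r * σ'^(m-r)) := by ring
    calc ∑ r ∈ Finset.range (m+1),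
          ((c γ₀)^(2*r) * ((2*m).choose (2*r) : ℝ)) * (∑ x : G, (chi γ₀ x)^(2*r) * (f' x)^(2*m-2*r))
        ≤ ∑ r ∈ Finset.range (m+1), N * Df m * (((m.choose r : ℝ)) * ((c γ₀)^2)^r * σ'^(m-r)) :=
          Finset.sum_le_sum hbound
      _ = N * Df m * ∑ r ∈ Finset.range (m+1), ((c γ₀)^2)^r * σ'^(m-r) * ((m.choose r : ℝ)) := by
          rw [Finset.mul_sum]
          exact Finset.sum_congr rfl fun r _ => by ring
      _ = N * Df m * ((c γ₀)^2 + σ')^m := by rw [add_pow]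
      _ = N * Df m * (∑ γ ∈ Finset.cons γ₀ Λ' hnm, (c γ)^2)^m := by
          rw [Finset.sum_cons, hσ']

variable (A : Finset (Fin n → ZMod 2))

noncomputable def S (γ : G) : ℝ := ∑ a ∈ A, chi γ a

noncomputable def R (x : G) : ℝ :=
  ∑ a ∈ A, ∑ b ∈ A, ∑ c ∈ A, ∑ d ∈ A, (if a + b + c + d = x then (1:ℝ) else 0)

lemma sum_chi_left (v : G) : ∑ γ : G, chi γ v = if v = 0 then ((Fintype.card G : ℝ)) else 0 := by
  simp_rw [chi_comm]; exact sum_chi v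

set_option maxHeartbeats 2000000 in
lemma parseval : ∑ γ : G, (S A γ)^2 = (Fintype.card G : ℝ) * A.card := by
  have e1 : ∀ γ : G, (S A γ)^2 = ∑ a ∈ A, ∑ b ∈ A, chi γ (a + b) := by
    intro γ
    rw [sq]
    unfold S
    rw [Finset.sum_mul_sum]
    exact Finset.sum_congr rfl fun a _ => Finset.sum_congr rfl fun b _ => (chi_add_right γ a b).symm
  simp_rw [e1]
  rw [Finset.sum_comm]
  have e2 : ∀ a ∈ A, ∑ b ∈ A, ∑ γ : G, chi γ (a + b) = (Fintype.card G : ℝ) := by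
    intro a ha
    have : ∀ b ∈ A, ∑ γ : G, chi γ (a + b) = if a = b then ((Fintype.card G : ℝ)) else 0 := by
      intro b _
      rw [sum_chi_left]
      simp only [add_eq_zero_iff]
    rw [Finset.sum_congr rfl this, Finset.sum_ite_eq A a (fun _ => ((Fintype.card G : ℝ))), if_pos ha]
  calc ∑ a ∈ A, ∑ γ : G, ∑ b ∈ A, chi γ (a + b)
      = ∑ a ∈ A, ∑ b ∈ A, ∑ γ : G, chi γ (a + b) := by
        exact Finset.sum_congr rfl fun a _ => Finset.sum_comm
    _ = ∑ a ∈ A, (Fintype.card G : ℝ) := Finset.sum_congr rfl e2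
    _ = (Fintype.card G : ℝ) * A.card := by rw [Finset.sum_const, nsmul_eq_mul, mul_comm]

set_option maxHeartbeats 2000000 in
lemma sum_four (x : G) :
    ∑ γ : G, (S A γ)^4 * chi γ x = (Fintype.card G : ℝ) * R A x := by
  have e1 : ∀ γ : G, (S A γ)^4 * chi γ x
      = ∑ a ∈ A, ∑ b ∈ A, ∑ c ∈ A, ∑ d ∈ A, chi γ (a + b + c + d + x) := by
    intro γ
    have h : (S A γ)^4 * chi γ x =
        (∑ a ∈ A, chi γ a) * ((∑ b ∈ A, chi γ b) * ((∑ c ∈ A, chi γ c) * ((∑ d ∈ A, chi γ d) * chi γ x))) := by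
      unfold S; ring
    rw [h]
    simp only [Finset.sum_mul, Finset.mul_sum]
    refine Finset.sum_congr rfl fun a _ => Finset.sum_congr rfl fun b _ =>
      Finset.sum_congr rfl fun c _ => Finset.sum_congr rfl fun d _ => ?_
    rw [chi_add_right, chi_add_right, chi_add_right, chi_add_right]
    ring
  simp_rw [e1]
  rw [Finset.sum_comm]
  have swap2 : ∀ a ∈ A, ∑ γ : G, ∑ b ∈ A, ∑ c ∈ A, ∑ d ∈ A, chi γ (a+b+c+d+x)
      = ∑ b ∈ A, ∑ c ∈ A, ∑ d ∈ A, ∑ γ : G, chi γ (a+b+c+d+x) := by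
    intro a _
    rw [Finset.sum_comm]
    refine Finset.sum_congr rfl fun b _ => ?_
    rw [Finset.sum_comm]
    refine Finset.sum_congr rfl fun c _ => ?_
    rw [Finset.sum_comm]
  rw [Finset.sum_congr rfl swap2]
  unfold R
  rw [Finset.mul_sum]
  refine Finset.sum_congr rfl fun a _ => ?_
  rw [Finset.mul_sum]
  refine Finset.sum_congr rfl fun b _ => ?_
  rw [Finset.mul_sum]
  refine Finset.sum_congr rfl fun c _ => ?_
  rw [Finset.mul_sum]
  refine Finset.sum_congr rfl fun d _ => ?_
  rw [sum_chi_left]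
  simp only [add_eq_zero_iff, mul_ite, mul_one, mul_zero]

lemma sum_four_zero : ∑ γ : G, (S A γ)^4 = (Fintype.card G : ℝ) * R A 0 := by
  have := sum_four A 0
  simp_rw [chi_zero_right, mul_one] at this
  exact this

lemma R_nonneg (x : G) : 0 ≤ R A x := by
  unfold R
  refine Finset.sum_nonneg fun a _ => Finset.sum_nonneg fun b _ =>
    Finset.sum_nonneg fun c _ => Finset.sum_nonneg fun d _ => ?_
  split <;> norm_num

noncomputable def w (s : G) : ℝ := ∑ a ∈ A, ∑ b ∈ A, (if a + b = s then (1:ℝ) else 0)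

lemma w_nonneg (s : G) : 0 ≤ w A s := by
  unfold w
  refine Finset.sum_nonneg fun a _ => Finset.sum_nonneg fun b _ => ?_
  split <;> norm_num

lemma sum_w : ∑ s ∈ A + A, w A s = (A.card : ℝ)^2 := by
  unfold w
  rw [Finset.sum_comm]
  have e1 : ∀ a ∈ A, ∑ s ∈ A + A, ∑ b ∈ A, (if a + b = s then (1:ℝ) else 0)
      = (A.card : ℝ) := by
    intro a ha
    rw [Finset.sum_comm]
    have e2 : ∀ b ∈ A, ∑ s ∈ A + A, (if a + b = s then (1:ℝ) else 0) = 1 := by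
      intro b hb
      rw [Finset.sum_ite_eq (A + A) (a + b) (fun _ => (1:ℝ)),
        if_pos (Finset.add_mem_add ha hb)]
    rw [Finset.sum_congr rfl e2, Finset.sum_const, nsmul_eq_mul, mul_one]
  rw [Finset.sum_congr rfl e1, Finset.sum_const, nsmul_eq_mul, sq, mul_comm]

lemma R_zero_eq : R A 0 = ∑ s ∈ A + A, (w A s)^2 := by
  unfold R
  have e1 : ∀ a ∈ A, ∀ b ∈ A, ∑ c ∈ A, ∑ d ∈ A, (if a + b + c + d = 0 then (1:ℝ) else 0)
      = w A (a + b) := by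
    intro a ha b hb
    unfold w
    refine Finset.sum_congr rfl fun c _ => Finset.sum_congr rfl fun d _ => ?_
    congr 1
    have h1 : a + b + c + d = 0 ↔ c + d = a + b := by
      rw [show a + b + c + d = (a+b) + (c+d) by ring, add_eq_zero_iff]
      exact eq_comm
    simp only [h1, eq_iff_iff]
  calc ∑ a ∈ A, ∑ b ∈ A, ∑ c ∈ A, ∑ d ∈ A, (if a + b + c + d = 0 then (1:ℝ) else 0)
      = ∑ a ∈ A, ∑ b ∈ A, w A (a + b) := by
        refine Finset.sum_congr rfl fun a ha => Finset.sum_congr rfl fun b hb => e1 a ha b hb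
    _ = ∑ a ∈ A, ∑ b ∈ A, ∑ s ∈ A + A, (if a + b = s then (1:ℝ) else 0) * w A s := by
        refine Finset.sum_congr rfl fun a ha => Finset.sum_congr rfl fun b hb => ?_
        have e := Finset.sum_ite_eq (A+A) (a+b) (w A)
        rw [if_pos (Finset.add_mem_add ha hb)] at e
        rw [← e]
        exact Finset.sum_congr rfl fun s _ => by rw [ite_mul, one_mul, zero_mul]
    _ = ∑ a ∈ A, ∑ s ∈ A + A, ∑ b ∈ A, (if a + b = s then (1:ℝ) else 0) * w A s := by
        exact Finset.sum_congr rfl fun a _ => Finset.sum_comm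
    _ = ∑ s ∈ A + A, ∑ a ∈ A, ∑ b ∈ A, (if a + b = s then (1:ℝ) else 0) * w A s :=
        Finset.sum_comm
    _ = ∑ s ∈ A + A, (∑ a ∈ A, ∑ b ∈ A, (if a + b = s then (1:ℝ) else 0)) * w A s := by
        refine Finset.sum_congr rfl fun s _ => ?_
        rw [Finset.sum_mul]
        exact Finset.sum_congr rfl fun a _ => by rw [Finset.sum_mul]
    _ = ∑ s ∈ A + A, (w A s)^2 := by
        refine Finset.sum_congr rfl fun s _ => ?_
        rw [← w]; ring

lemma energy_lower : ((A.card : ℝ)^2)^2 ≤ ((A + A).card : ℝ) * R A 0 := by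
  rw [R_zero_eq, ← sum_w A]
  exact_mod_cast sq_sum_le_card_mul_sum_sq (s := A + A) (f := w A)




/-- dot product with `γ` as a linear map -/
def dotL (γ : Fin n → ZMod 2) : (Fin n → ZMod 2) →ₗ[ZMod 2] ZMod 2 where
  toFun := fun x => dotProduct γ x
  map_add' := fun x y => dotProduct_add γ x y
  map_smul' := fun c x => by
    simp only [RingHom.id_apply]
    rw [dotProduct_smul, smul_eq_mul]

end ChangAux

open ChangAux
set_option maxHeartbeats 3000000

/-- Chang's theorem: if `A ⊆ 𝔽₂ⁿ` has density `α` and `|A+A| ≤ K|A|` then `A+A+A+A`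
contains a subspace of codimension `O(K log(1/α))`. -/
theorem chang_fourfold_sumset_contains_subspace :
    ∃ C : ℝ, 0 < C ∧
      ∀ (n : ℕ) (A : Finset (Fin n → ZMod 2)) (K : ℝ), A.Nonempty → 1 ≤ K →
        ((A + A).card : ℝ) ≤ K * A.card →
        ∃ V : Submodule (ZMod 2) (Fin n → ZMod 2),
          (V : Set (Fin n → ZMod 2)) ⊆ (↑(A + A + A + A) : Set (Fin n → ZMod 2)) ∧
          ((n : ℝ) - Module.finrank (ZMod 2) V) ≤
            C * K * Real.log (((A.card : ℝ) / 2 ^ n)⁻¹) + C := by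
  classical
  refine ⟨100, by norm_num, ?_⟩
  intro n A K hA hK hdbl
  set a : ℝ := (A.card : ℝ) with ha'
  have hapos : 0 < a := by
    rw [ha']
    exact_mod_cast Finset.card_pos.mpr hA
  have hK0 : (0:ℝ) < K := lt_of_lt_of_le one_pos hK
  set N : ℝ := (Fintype.card (Fin n → ZMod 2) : ℝ) with hN'
  have hcardG : N = 2^n := by
    rw [hN', Fintype.card_fun, ZMod.card 2, Fintype.card_fin]
    push_cast
    rfl
  have hNpos : 0 < N := by rw [hcardG]; positivity
  have haN : a ≤ N := by
    rw [ha', hN']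
    exact_mod_cast Finset.card_le_univ A
  set L : ℝ := Real.log ((a / 2^n)⁻¹) with hL'
  have hLa : (a / 2^n)⁻¹ = N / a := by
    rw [hcardG, inv_div]
  have hNa1 : 1 ≤ N / a := (one_le_div hapos).mpr haN
  have hL0 : 0 ≤ L := by
    rw [hL', hLa]
    exact Real.log_nonneg hNa1
  show ∃ V : Submodule (ZMod 2) (Fin n → ZMod 2),
      (V : Set (Fin n → ZMod 2)) ⊆ (↑(A + A + A + A) : Set (Fin n → ZMod 2)) ∧
      ((n : ℝ) - Module.finrank (ZMod 2) V) ≤ 100 * K * L + 100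
  have hfinrankG : Module.finrank (ZMod 2) (Fin n → ZMod 2) = n := by
    rw [Module.finrank_pi]
    exact Fintype.card_fin n
  by_cases hbig : N < 2*a
  · -- dense case : A + A = univ
    have key : ∀ x : Fin n → ZMod 2, x ∈ A + A := by
      intro x
      set B := A.image (fun y => x + y) with hB
      have hBcard : B.card = A.card := Finset.card_image_of_injective A (add_right_injective x)
      have hnd : ¬ Disjoint A B := by
        intro hd
        have hcu := Finset.card_union_of_disjoint hd
        have hle := Finset.card_le_univ (A ∪ B)
        rw [hcu, hBcard] at hle
        have hle' := (Nat.cast_le (α := ℝ)).mpr hle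
        push_cast at hle'
        have : 2 * a ≤ N := by
          rw [ha', hN']
          linarith
        linarith
      obtain ⟨y, hyA, hyB⟩ := Finset.not_disjoint_iff.mp hnd
      obtain ⟨z, hzA, hzy⟩ := Finset.mem_image.mp hyB
      have hx : x = y + z := by
        calc x = x + (z + z) := by rw [add_self_zero, add_zero]
        _ = (x + z) + z := (add_assoc x z z).symm
        _ = y + z := by rw [hzy]
      rw [hx]
      exact Finset.add_mem_add hyA hzA
    refine ⟨⊤, ?_, ?_⟩
    · intro x _
      have h4 : A + A + A + A = (A + A) + (A + A) := by rw [add_assoc]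
      rw [Finset.mem_coe, h4, Finset.mem_add]
      obtain ⟨y, hy⟩ := hA
      refine ⟨x, key x, 0, ?_, add_zero x⟩
      have h0 : (0 : Fin n → ZMod 2) = y + y := (add_self_zero y).symm
      rw [h0]
      exact Finset.add_mem_add hy hy
    · rw [finrank_top, hfinrankG]
      have : (0:ℝ) ≤ 100 * K * L := by
        apply mul_nonneg (by linarith) hL0
      linarith
  · -- main case
    push_neg at hbig
    set θ : ℝ := a^2/(4*K) with hθ
    have hθpos : 0 < θ := by rw [hθ]; positivity
    set Δ : Finset (Fin n → ZMod 2) := Finset.univ.filter (fun γ => θ ≤ (S A γ)^2) with hΔ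
    obtain ⟨b, hbΔ, hbspan, hbindep⟩ := exists_linearIndependent (ZMod 2) (↑Δ : Set (Fin n → ZMod 2))
    have hbfin : b.Finite := Set.Finite.subset Δ.finite_toSet hbΔ
    set Λ : Finset (Fin n → ZMod 2) := hbfin.toFinset with hΛ
    have hΛcoe : (↑Λ : Set (Fin n → ZMod 2)) = b := Set.Finite.coe_toFinset hbfin
    have hΛindep : LinearIndependent (ZMod 2)
        (fun γ : (Λ : Set (Fin n → ZMod 2)) => (γ : Fin n → ZMod 2)) := by
      rw [hΛcoe]; exact hbindep
    have hΛsubΔ : Λ ⊆ Δ := by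
      intro γ hγ
      have h1 : (γ : Fin n → ZMod 2) ∈ b := by
        rw [← hΛcoe]; exact Finset.mem_coe.mpr hγ
      exact Finset.mem_coe.mp (hbΔ h1)
    set Φ : (Fin n → ZMod 2) →ₗ[ZMod 2] ({x // x ∈ Λ} → ZMod 2) :=
      LinearMap.pi (fun γ : {x // x ∈ Λ} => dotL (γ : Fin n → ZMod 2)) with hΦ
    set V : Submodule (ZMod 2) (Fin n → ZMod 2) := LinearMap.ker Φ with hV
    have hmemdot : ∀ x ∈ V, ∀ γ ∈ Δ, dotProduct γ x = 0 := by
      intro x hxV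
      have hxker : ∀ γ' : {x // x ∈ Λ}, dotProduct (γ' : Fin n → ZMod 2) x = 0 := by
        intro γ'
        have h0 : Φ x = 0 := LinearMap.mem_ker.mp hxV
        have h1 : Φ x γ' = 0 := by rw [h0]; rfl
        rwa [hΦ, LinearMap.pi_apply] at h1
      have hspan0 : ∀ δ ∈ Submodule.span (ZMod 2) b, dotProduct δ x = 0 := by
        intro δ hδ
        induction hδ using Submodule.span_induction with
        | mem δ' hδ' =>
          have hδΛ : δ' ∈ Λ := by
            rw [← Finset.mem_coe, hΛcoe]; exact hδ'
          exact hxker ⟨δ', hδΛ⟩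
        | zero => exact zero_dotProduct x
        | add δ₁ δ₂ _ _ h1 h2 => rw [add_dotProduct, h1, h2, add_zero]
        | smul c δ'' _ h1 => rw [smul_dotProduct, h1, smul_zero]
      intro γ hγΔ
      exact hspan0 γ (by rw [hbspan]; exact Submodule.subset_span (Finset.mem_coe.mpr hγΔ))
    refine ⟨V, ?_, ?_⟩
    · -- V ⊆ A+A+A+A
      intro x hxV
      have hchiΔ : ∀ γ ∈ Δ, chi γ x = 1 := fun γ hγ => chi_eq_one γ x (hmemdot x hxV γ hγ)
      -- lower bound the fourfold count
      set Δc := Finset.univ.filter (fun γ => ¬ θ ≤ (S A γ)^2) with hΔc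
      have hsplit := Finset.sum_filter_add_sum_filter_not Finset.univ
        (fun γ => θ ≤ (S A γ)^2) (fun γ => (S A γ)^4 * chi γ x)
      rw [← hΔ, ← hΔc] at hsplit
      have hsplit4 := Finset.sum_filter_add_sum_filter_not Finset.univ
        (fun γ => θ ≤ (S A γ)^2) (fun γ => (S A γ)^4)
      rw [← hΔ, ← hΔc] at hsplit4
      have hDel : ∑ γ ∈ Δ, (S A γ)^4 * chi γ x = ∑ γ ∈ Δ, (S A γ)^4 := by
        refine Finset.sum_congr rfl fun γ hγ => ?_
        rw [hchiΔ γ hγ, mul_one]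
      have hlow : ∀ γ ∈ Δc, -((S A γ)^4) ≤ (S A γ)^4 * chi γ x := by
        intro γ _
        have hs4 : (0:ℝ) ≤ (S A γ)^4 := by positivity
        have := mul_le_mul_of_nonneg_left (neg_one_le_chi γ x) hs4
        rw [mul_neg_one] at this
        exact this
      have hsmall : ∀ γ ∈ Δc, (S A γ)^4 ≤ θ * (S A γ)^2 := by
        intro γ hγ
        rw [hΔc, Finset.mem_filter] at hγ
        have h1 : (S A γ)^2 < θ := lt_of_not_ge hγ.2
        nlinarith [sq_nonneg (S A γ)]
      have hsum2 : ∑ γ ∈ Δc, (S A γ)^2 ≤ N * a := by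
        rw [ha', hN', ← parseval A]
        exact Finset.sum_le_sum_of_subset_of_nonneg (Finset.filter_subset _ _)
          (fun γ _ _ => sq_nonneg _)
      have hsum4c : ∑ γ ∈ Δc, (S A γ)^4 ≤ θ * (N * a) := by
        calc ∑ γ ∈ Δc, (S A γ)^4 ≤ ∑ γ ∈ Δc, θ * (S A γ)^2 := Finset.sum_le_sum hsmall
        _ = θ * ∑ γ ∈ Δc, (S A γ)^2 := by rw [Finset.mul_sum]
        _ ≤ θ * (N * a) := mul_le_mul_of_nonneg_left hsum2 hθpos.le
      have htot4 : ∑ γ : Fin n → ZMod 2, (S A γ)^4 = N * R A 0 := by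
        rw [hN']; exact sum_four_zero A
      have hDelsum : ∑ γ ∈ Δ, (S A γ)^4 = N * R A 0 - ∑ γ ∈ Δc, (S A γ)^4 := by
        rw [← htot4]
        linarith [hsplit4]
      have hR0 : a^3/K ≤ R A 0 := by
        rw [div_le_iff₀ hK0]
        have h1 : ((a)^2)^2 ≤ ((A+A).card : ℝ) * R A 0 := energy_lower A
        have h2 : ((A+A).card : ℝ) * R A 0 ≤ K * a * R A 0 :=
          mul_le_mul_of_nonneg_right hdbl (R_nonneg A 0)
        have h3 : a * (a^3) ≤ a * (R A 0 * K) := by nlinarith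
        exact le_of_mul_le_mul_left h3 hapos
      have hchain : N * R A x ≥ N * R A 0 - 2 * θ * N * a := by
        have e1 : ∑ γ : Fin n → ZMod 2, (S A γ)^4 * chi γ x = N * R A x := by
          rw [hN']; exact sum_four A x
        have e2 : ∑ γ ∈ Δc, (S A γ)^4 * chi γ x ≥ -(θ * (N * a)) := by
          calc ∑ γ ∈ Δc, (S A γ)^4 * chi γ x ≥ ∑ γ ∈ Δc, -((S A γ)^4) :=
            Finset.sum_le_sum hlow
          _ = -∑ γ ∈ Δc, (S A γ)^4 := by rw [Finset.sum_neg_distrib]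
          _ ≥ -(θ * (N * a)) := neg_le_neg hsum4c
        have e3 : ∑ γ ∈ Δ, (S A γ)^4 ≥ N * R A 0 - θ * (N * a) := by
          rw [hDelsum]; linarith [hsum4c]
        have e4 : ∑ γ ∈ Δ, (S A γ)^4 * chi γ x + ∑ γ ∈ Δc, (S A γ)^4 * chi γ x
            = N * R A x := by rw [hsplit, e1]
        rw [hDel] at e4
        linarith [e2, e3, e4]
      have hRx : 0 < R A x := by
        have h1 : N * R A 0 ≥ N * (a^3/K) := mul_le_mul_of_nonneg_left hR0 hNpos.le
        have h2 : 2 * θ * N * a = N * (a^3/(2*K)) := by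
          rw [hθ]; field_simp; ring
        have h3 : N * R A x ≥ N * (a^3/K) - N * (a^3/(2*K)) := by
          rw [← h2]; linarith [hchain, h1]
        have h4 : N * (a^3/K) - N * (a^3/(2*K)) = N * a^3/(2*K) := by
          field_simp; ring
        have h5 : 0 < N * a^3/(2*K) := by positivity
        have h6 : 0 < N * R A x := by linarith [h3, h4.symm ▸ h5]
        nlinarith [h6, hNpos]
      -- conclude membership
      by_contra hnot
      have hzero : R A x = 0 := by
        unfold R
        refine Finset.sum_eq_zero fun p hp => Finset.sum_eq_zero fun q hq =>
          Finset.sum_eq_zero fun r hr => Finset.sum_eq_zero fun s hs => ?_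
        rw [if_neg]
        intro heq
        apply hnot
        rw [← heq]
        exact Finset.mem_coe.mpr
          (Finset.add_mem_add (Finset.add_mem_add (Finset.add_mem_add hp hq) hr) hs)
      rw [hzero] at hRx
      exact lt_irrefl 0 hRx
    · -- codimension bound
      have hrank : n ≤ Λ.card + Module.finrank (ZMod 2) V := by
        have h1 := LinearMap.finrank_range_add_finrank_ker Φ
        rw [hfinrankG] at h1
        have h3 : Module.finrank (ZMod 2) (LinearMap.range Φ) ≤ Λ.card := by
          calc Module.finrank (ZMod 2) (LinearMap.range Φ)
              ≤ Module.finrank (ZMod 2) ({x // x ∈ Λ} → ZMod 2) :=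
                Submodule.finrank_le _
          _ = Fintype.card {x // x ∈ Λ} := Module.finrank_pi _
          _ = Λ.card := Fintype.card_coe Λ
        rw [hV]
        omega
      -- Chang count
      set σ : ℝ := ∑ γ ∈ Λ, (S A γ)^2 with hσ
      have hσ0 : 0 ≤ σ := Finset.sum_nonneg fun γ _ => sq_nonneg _
      have hkθ : (Λ.card : ℝ) * θ ≤ σ := by
        have h1 : ∀ γ ∈ Λ, θ ≤ (S A γ)^2 := by
          intro γ hγ
          have := hΛsubΔ hγ
          rw [hΔ, Finset.mem_filter] at this
          exact this.2
        have := Finset.card_nsmul_le_sum Λ (fun γ => (S A γ)^2) θ h1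
        rw [nsmul_eq_mul] at this
        exact this
      set f : (Fin n → ZMod 2) → ℝ := fun x => ∑ γ ∈ Λ, S A γ * chi γ x with hf
      have hσf : σ = ∑ x ∈ A, f x := by
        calc σ = ∑ γ ∈ Λ, (S A γ)^2 := hσ
        _ = ∑ γ ∈ Λ, S A γ * (∑ x ∈ A, chi γ x) := by
            refine Finset.sum_congr rfl fun γ _ => ?_
            rw [show (∑ x ∈ A, chi γ x) = S A γ from rfl]
            ring
        _ = ∑ γ ∈ Λ, ∑ x ∈ A, S A γ * chi γ x := by
            exact Finset.sum_congr rfl fun γ _ => Finset.mul_sum _ _ _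
        _ = ∑ x ∈ A, ∑ γ ∈ Λ, S A γ * chi γ x := Finset.sum_comm
        _ = ∑ x ∈ A, f x := rfl
      set m : ℕ := max 1 ⌈L⌉₊ with hm
      have hm1 : 1 ≤ m := le_max_left _ _
      have hmL : L ≤ (m:ℝ) := by
        calc L ≤ (⌈L⌉₊ : ℝ) := Nat.le_ceil L
        _ ≤ (m : ℝ) := by exact_mod_cast le_max_right 1 ⌈L⌉₊
      have hkm : (Λ.card : ℝ) ≤ 36*K*(m:ℝ) := by
        by_contra hgt
        push_neg at hgt
        have h36pos : (0:ℝ) < 36*K*(m:ℝ) := by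
          have : (1:ℝ) ≤ (m:ℝ) := by exact_mod_cast hm1
          nlinarith
        have hkpos : (0:ℝ) < (Λ.card : ℝ) := lt_trans h36pos hgt
        have hσpos : 0 < σ := lt_of_lt_of_le (mul_pos hkpos hθpos) hkθ
        have c1 : σ^(2*m) ≤ (∑ x ∈ A, |f x|)^(2*m) := by
          apply pow_le_pow_left₀ hσ0
          rw [hσf]
          exact le_trans (le_abs_self _) (Finset.abs_sum_le_sum_abs f A)
        have c2 : (∑ x ∈ A, |f x|)^(2*m) ≤ a^(2*m-1) * ∑ x ∈ A, |f x|^(2*m) := by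
          have hfix := pow_sum_le_card_mul_sum_pow (s := A) (f := fun x => |f x|)
            (fun x _ => abs_nonneg _) (2*m-1)
          have h2m : (2*m-1)+1 = 2*m := by omega
          rw [h2m] at hfix
          rw [ha']
          exact hfix
        have c3 : ∑ x ∈ A, |f x|^(2*m) ≤ ∑ x : Fin n → ZMod 2, (f x)^(2*m) := by
          have e : ∀ x, |f x|^(2*m) = (f x)^(2*m) := fun x => by
            rw [pow_mul, sq_abs, ← pow_mul]
          rw [Finset.sum_congr rfl fun x _ => e x]
          refine Finset.sum_le_sum_of_subset_of_nonneg (Finset.subset_univ A) ?_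
          intro x _ _
          rw [pow_mul]
          positivity
        have c4 := khintchine (S A) Λ hΛindep m
        rw [← hN'] at c4
        have c5 : Df m ≤ (3*(m:ℝ))^m := by
          refine le_trans (Df_le m) (pow_le_pow_left₀ (by positivity) ?_ m)
          have : (1:ℝ) ≤ (m:ℝ) := by exact_mod_cast hm1
          push_cast
          linarith
        have hσm : σ^m ≤ a^(2*m-1) * N * (3*(m:ℝ))^m := by
          have h2 : σ^(2*m) = σ^m * σ^m := by rw [two_mul, pow_add]
          have hchain2 : σ^m * σ^m ≤ (a^(2*m-1) * N * (3*(m:ℝ))^m) * σ^m := by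
            rw [← h2]
            calc σ^(2*m) ≤ (∑ x ∈ A, |f x|)^(2*m) := c1
            _ ≤ a^(2*m-1) * ∑ x ∈ A, |f x|^(2*m) := c2
            _ ≤ a^(2*m-1) * ∑ x : Fin n → ZMod 2, (f x)^(2*m) := by
                apply mul_le_mul_of_nonneg_left c3
                positivity
            _ ≤ a^(2*m-1) * (N * Df m * σ^m) := by
                refine mul_le_mul_of_nonneg_left ?_ (by positivity)
                exact c4
            _ ≤ (a^(2*m-1) * N * (3*(m:ℝ))^m) * σ^m := by
                have hDf0 : 0 ≤ Df m := Nat.cast_nonneg _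
                have h5 : N * Df m * σ^m ≤ N * (3*(m:ℝ))^m * σ^m := by
                  apply mul_le_mul_of_nonneg_right _ (pow_nonneg hσ0 m)
                  exact mul_le_mul_of_nonneg_left c5 hNpos.le
                calc a^(2*m-1) * (N * Df m * σ^m)
                    ≤ a^(2*m-1) * (N * (3*(m:ℝ))^m * σ^m) := by
                      apply mul_le_mul_of_nonneg_left h5
                      positivity
                _ = (a^(2*m-1) * N * (3*(m:ℝ))^m) * σ^m := by ring
          exact le_of_mul_le_mul_right hchain2 (pow_pos hσpos m)
        have h9 : (9*(m:ℝ)*a^2)^m ≤ ((Λ.card:ℝ) * θ)^m := by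
          apply pow_le_pow_left₀ (by positivity)
          have h1 := mul_le_mul_of_nonneg_right hgt.le (le_of_lt hθpos)
          have h2 : 36*K*(m:ℝ)*θ = 9*(m:ℝ)*a^2 := by
            rw [hθ]; field_simp; ring
          linarith
        have hkθm : ((Λ.card:ℝ) * θ)^m ≤ σ^m :=
          pow_le_pow_left₀ (by positivity) hkθ m
        have hdiv : 3^m * a ≤ N := by
          have hpos : (0:ℝ) < (3*(m:ℝ))^m * a^(2*m-1) := by positivity
          apply le_of_mul_le_mul_right _ hpos
          have hexp : (9*(m:ℝ)*a^2)^m = 3^m * (3*(m:ℝ))^m * (a^2)^m := by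
            rw [← mul_pow, ← mul_pow]
            congr 1
            ring
          have ha2m : ((a:ℝ)^2)^m = a^(2*m) := by rw [← pow_mul]
          have h2m1 : a^(2*m) = a^(2*m-1) * a := by
            rw [← pow_succ]
            congr 1
            omega
          calc 3^m * a * ((3*(m:ℝ))^m * a^(2*m-1))
              = 3^m * (3*(m:ℝ))^m * (a^2)^m := by rw [ha2m, h2m1]; ring
          _ = (9*(m:ℝ)*a^2)^m := hexp.symm
          _ ≤ ((Λ.card:ℝ) * θ)^m := h9
          _ ≤ σ^m := hkθm
          _ ≤ a^(2*m-1) * N * (3*(m:ℝ))^m := hσm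
          _ = N * ((3*(m:ℝ))^m * a^(2*m-1)) := by ring
        have hNexp : N = Real.exp L * a := by
          have : Real.exp L = N / a := by
            rw [hL', hLa]
            exact Real.exp_log (by positivity)
          rw [this]
          field_simp
        have hexpm : Real.exp L ≤ Real.exp (m:ℝ) := Real.exp_le_exp.mpr hmL
        have h3m : Real.exp (m:ℝ) < 3^m := by
          have h1 : Real.exp (m:ℝ) = (Real.exp 1)^m := by
            rw [← Real.exp_nat_mul]
            congr 1
            ring
          rw [h1]
          apply pow_lt_pow_left₀ _ (Real.exp_pos 1).le (by omega)
          calc Real.exp 1 < 2.7182818286 := Real.exp_one_lt_d9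
          _ < 3 := by norm_num
        have hcon : Real.exp L * a < 3^m * a :=
          mul_lt_mul_of_pos_right (lt_of_le_of_lt hexpm h3m) hapos
        rw [← hNexp] at hcon
        linarith
      -- m ≤ 2.5 L
      have hLlog2 : Real.log 2 ≤ L := by
        rw [hL', hLa]
        have h2 : (2:ℝ) ≤ N / a := (le_div_iff₀ hapos).mpr (by linarith)
        exact Real.log_le_log (by norm_num) h2
      have hLpos : 0 < L := lt_of_lt_of_le (Real.log_pos (by norm_num)) hLlog2
      have hmceil : m = ⌈L⌉₊ := max_eq_right (Nat.one_le_ceil_iff.mpr hLpos)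
      have hmle : (m:ℝ) ≤ L + 1 := by
        rw [hmceil]
        exact (Nat.ceil_lt_add_one hL0).le
      have hm25 : (m:ℝ) ≤ 2.5 * L := by
        have h2 : (0.693:ℝ) ≤ Real.log 2 := by linarith [Real.log_two_gt_d9]
        nlinarith
      -- assemble
      have hcast : ((n:ℝ)) - Module.finrank (ZMod 2) V ≤ (Λ.card : ℝ) := by
        have : (n:ℝ) ≤ (Λ.card : ℝ) + (Module.finrank (ZMod 2) V : ℝ) := by
          exact_mod_cast hrank
        linarith
      calc ((n:ℝ)) - Module.finrank (ZMod 2) V ≤ (Λ.card : ℝ) := hcast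
      _ ≤ 36*K*(m:ℝ) := hkm
      _ ≤ 36*K*(2.5*L) := by
          apply mul_le_mul_of_nonneg_left hm25
          linarith
      _ ≤ 100 * K * L + 100 := by nlinarith [hK0, hL0, mul_nonneg hK0.le hL0]
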